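/- Let G be a (possibly infinite) graph, H an abelian Hausdorff topological group, and A a compact subset of H. Then G admits an A-flow (a map f from oriented edges to A with f(e⁻) = −f(e) that sums to zero over every finite oriented cut) if and only if for every finite set M of finite cuts of G there exists a map f from oriented edges to A summing to zero over every cut in M. -/

import Mathlib

/-- The oriented edges of `G` crossing from `X` to its complement. -/
def orientedCut {V : Type*} (G : SimpleGraph V) (X : Set V) : Set (V × V) :=
  {p | G.Adj p.1 p.2 ∧ p.1 ∈ X ∧ p.2 ∉ X}

/-- Compactness theorem for `A`-flows: a graph `G` has an `A`-flow (values in the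
compact set `A`, antisymmetric, summing to zero over every finite oriented cut) iff
for every finite set `M` of finite cuts there is such a map summing to zero over
every cut in `M`. -/
theorem stmt0 {V H : Type*} [AddCommGroup H] [TopologicalSpace H]
    [IsTopologicalAddGroup H] [T2Space H]
    (G : SimpleGraph V) (A : Set H) (hA : IsCompact A) :
    (∃ f : V → V → H,
        (∀ x y, G.Adj x y → f x y ∈ A) ∧
        (∀ x y : V, f y x = - f x y) ∧
        (∀ X : Set V, (orientedCut G X).Finite →
          ∑ᶠ p ∈ orientedCut G X, f p.1 p.2 = 0)) ↔
      ∀ M : Finset (Set V), (∀ X ∈ M, (orientedCut G X).Finite) →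
        ∃ f : V → V → H,
          (∀ x y, G.Adj x y → f x y ∈ A) ∧
          (∀ x y : V, f y x = - f x y) ∧
          (∀ X ∈ M, ∑ᶠ p ∈ orientedCut G X, f p.1 p.2 = 0) := by
  constructor
  · rintro ⟨f, h1, h2, h3⟩ M hM
    exact ⟨f, h1, h2, fun X hX => h3 X (hM X hX)⟩
  · intro hfin
    classical
    -- the compact "box" of candidate values
    set A' : Set H := A ∪ {0} with hA'def
    have hA'c : IsCompact A' := hA.union isCompact_singleton
    -- the set of admissible candidate functions
    set C : Set ((V × V) → H) :=
      {f | (∀ x y, G.Adj x y → f (x, y) ∈ A) ∧ (∀ x y, f (y, x) = - f (x, y)) ∧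
           (∀ x y, ¬ G.Adj x y → f (x, y) = 0)} with hCdef
    have hCsub : C ⊆ Set.pi Set.univ (fun _ => A') := by
      rintro f ⟨h1, h2, h3⟩ p _
      by_cases h : G.Adj p.1 p.2
      · exact Or.inl (by simpa using h1 p.1 p.2 h)
      · exact Or.inr (by simpa using h3 p.1 p.2 h)
    have hCclosed : IsClosed C := by
      have hev : ∀ p : V × V, Continuous fun f : (V × V) → H => f p :=
        fun p => continuous_apply p
      have hc1 : IsClosed {f : (V × V) → H | ∀ x y, G.Adj x y → f (x, y) ∈ A} := by
        simp only [Set.setOf_forall]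
        refine isClosed_iInter fun x => isClosed_iInter fun y => ?_
        by_cases h : G.Adj x y
        · simpa [h, Set.preimage] using hA.isClosed.preimage (hev (x, y))
        · simp [h]
      have hc2 : IsClosed {f : (V × V) → H | ∀ x y, f (y, x) = - f (x, y)} := by
        simp only [Set.setOf_forall]
        refine isClosed_iInter fun x => isClosed_iInter fun y => ?_
        exact isClosed_eq (hev (y, x)) (hev (x, y)).neg
      have hc3 : IsClosed {f : (V × V) → H | ∀ x y, ¬ G.Adj x y → f (x, y) = 0} := by
        simp only [Set.setOf_forall]
        refine isClosed_iInter fun x => isClosed_iInter fun y => ?_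
        by_cases h : G.Adj x y
        · simp [h]
        · simpa [h] using isClosed_eq (hev (x, y)) continuous_const
      have : C = {f : (V × V) → H | ∀ x y, G.Adj x y → f (x, y) ∈ A} ∩
          ({f | ∀ x y, f (y, x) = - f (x, y)} ∩ {f | ∀ x y, ¬ G.Adj x y → f (x, y) = 0}) := rfl
      rw [this]
      exact hc1.inter (hc2.inter hc3)
    have hC : IsCompact C :=
      (isCompact_univ_pi fun _ => hA'c).of_isClosed_subset hCclosed hCsub
    -- the closed constraint sets, one per finite cut
    set ι := {X : Set V // (orientedCut G X).Finite} with hιdef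
    set Z : ι → Set ((V × V) → H) :=
      fun X => {f | ∑ p ∈ X.2.toFinset, f p = 0} with hZdef
    have hZclosed : ∀ i, IsClosed (Z i) := fun i =>
      isClosed_eq (continuous_finset_sum _ fun p _ => (continuous_apply p : Continuous fun f : (V × V) → H => f p)) continuous_const
    have hFIP : ∀ u : Finset ι, (C ∩ ⋂ i ∈ u, Z i).Nonempty := by
      intro u
      obtain ⟨f, hf1, hf2, hf3⟩ := hfin (u.image Subtype.val)
        (by
          intro X hX
          simp only [Finset.mem_image] at hX
          obtain ⟨i, _, rfl⟩ := hX
          exact i.2)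
      refine ⟨fun p => if G.Adj p.1 p.2 then f p.1 p.2 else 0, ⟨?_, ?_, ?_⟩, ?_⟩
      · intro x y h; simpa [h] using hf1 x y h
      · intro x y
        by_cases h : G.Adj x y
        · simp [h, h.symm, hf2 x y]
        · have h' : ¬ G.Adj y x := fun hs => h hs.symm
          simp [h, h']
      · intro x y h; simp [h]
      · simp only [Set.mem_iInter]
        intro i hi
        have hsum := hf3 i.1 (Finset.mem_image_of_mem _ hi)
        rw [← i.2.coe_toFinset, finsum_mem_coe_finset] at hsum
        simp only [hZdef, Set.mem_setOf_eq]
        rw [← hsum]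
        refine Finset.sum_congr rfl fun p hp => ?_
        have : G.Adj p.1 p.2 := (i.2.mem_toFinset.mp hp).1
        simp [this]
    obtain ⟨f, hfC, hfZ⟩ := hC.inter_iInter_nonempty Z hZclosed hFIP
    obtain ⟨hf1, hf2, -⟩ := hfC
    refine ⟨fun x y => f (x, y), hf1, hf2, ?_⟩
    intro X hX
    simp only [Set.mem_iInter] at hfZ
    have := hfZ ⟨X, hX⟩
    simp only [hZdef, Set.mem_setOf_eq] at this
    rw [← hX.coe_toFinset, finsum_mem_coe_finset]
    exact this
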